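/- Let z ∈ ℂ∖{0} and let α, β, F, G, H : ℤ → ℂ satisfy the stationary zero-curvature relations at z, with F(n) ≠ 0 for all n. Let w ∈ ℂ satisfy w² = G(n)² − F(n)H(n) for all n, define φ(n) := (w + G(n))/F(n), and assume φ(n) ≠ 0 and z + α(n)φ(n−1) ≠ 0 for all n. Fix n₀ ∈ ℤ and define ψ₁(n) := Π_{n'=n₀+1}^{n} (z + α(n')φ(n'−1)) for n ≥ n₀+1, ψ₁(n₀) := 1, ψ₁(n) := Π_{n'=n+1}^{n₀} (z + α(n')φ(n'−1))^{−1} for n ≤ n₀−1, and ψ₂(n) := φ(n₀)·Π_{n'=n₀+1}^{n} (zβ(n')φ(n'−1)^{−1} + 1) for n ≥ n₀+1, ψ₂(n₀) := φ(n₀), ψ₂(n) := φ(n₀)·Π_{n'=n+1}^{n₀} (zβ(n')φ(n'−1)^{−1} + 1)^{−1} for n ≤ n₀−1. Then: (i) ψ₂(n) = φ(n)ψ₁(n) for all n; (ii) with U(z,n) = [[z, α(n)], [β(n)z, 1]], one has U(z,n)·(ψ₁(n−1), ψ₂(n−1))ᵀ = (ψ₁(n), ψ₂(n))ᵀ; (iii)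 with V(n) = i·[[G(n−1), −F(n−1)], [H(n−1), −G(n−1)]], one has V(n)·(ψ₁(n−1), ψ₂(n−1))ᵀ = −i w·(ψ₁(n−1), ψ₂(n−1))ᵀ. -/

import Mathlib

/-- The meromorphic function `φ(n) = (w + G(n))/F(n)`. -/
noncomputable def phiP (F G : ℤ → ℂ) (w : ℂ) (n : ℤ) : ℂ := (w + G n) / F n

/-- `prodZ f n₀ n = Π_{n'=n₀+1}^{n} f(n')` for `n ≥ n₀`, `= 1` for `n = n₀`, and
`= (Π_{n'=n+1}^{n₀} f(n'))⁻¹` for `n ≤ n₀ − 1`. -/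
noncomputable def prodZ (f : ℤ → ℂ) (n₀ n : ℤ) : ℂ :=
  if n₀ ≤ n then ∏ k ∈ Finset.Icc (n₀ + 1) n, f k
  else (∏ k ∈ Finset.Icc (n + 1) n₀, f k)⁻¹

/-- The first component of the Baker–Akhiezer vector. -/
noncomputable def psi1 (α F G : ℤ → ℂ) (w z : ℂ) (n₀ n : ℤ) : ℂ :=
  prodZ (fun n' => z + α n' * phiP F G w (n' - 1)) n₀ n

/-- The second component of the Baker–Akhiezer vector. -/
noncomputable def psi2 (α β F G : ℤ → ℂ) (w z : ℂ) (n₀ n : ℤ) : ℂ :=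
  phiP F G w n₀ * prodZ (fun n' => z * β n' * (phiP F G w (n' - 1))⁻¹ + 1) n₀ n

/-- Basic properties of the Baker–Akhiezer vector `Ψ = (ψ₁, ψ₂)ᵀ`:
`ψ₂ = φ ψ₁`, `U Ψ⁻ = Ψ`, and `V Ψ⁻ = −i w Ψ⁻`. -/
lemma prodZ_rec (f : ℤ → ℂ) (hf : ∀ k, f k ≠ 0) (n₀ n : ℤ) :
    prodZ f n₀ n = prodZ f n₀ (n - 1) * f n := by
  unfold prodZ
  rcases lt_trichotomy n n₀ with h | h | h
  · rw [if_neg (by omega), if_neg (by omega)]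
    have hins : Finset.Icc (n - 1 + 1) n₀ = insert n (Finset.Icc (n + 1) n₀) := by
      ext x; simp [Finset.mem_Icc]; omega
    rw [hins, Finset.prod_insert (by simp)]
    have hne : (∏ k ∈ Finset.Icc (n + 1) n₀, f k) ≠ 0 :=
      Finset.prod_ne_zero_iff.2 fun k _ => hf k
    field_simp [hf n]
  · subst h
    rw [if_pos le_rfl, if_neg (by omega)]
    rw [Finset.Icc_eq_empty (by omega), Finset.prod_empty]
    have : n - 1 + 1 = n := by ring
    rw [this, Finset.Icc_self, Finset.prod_singleton]
    field_simp [hf n]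
  · rw [if_pos (by omega), if_pos (by omega)]
    obtain ⟨m, rfl⟩ : ∃ m, n = m + 1 := ⟨n - 1, by ring⟩
    rw [show m + 1 - 1 = m by ring,
      show Finset.Icc (n₀ + 1) (m + 1) = insert (m + 1) (Finset.Icc (n₀ + 1) m) by
        ext x; simp [Finset.mem_Icc]; omega,
      Finset.prod_insert (by simp)]
    ring

theorem baker_akhiezer_properties (z : ℂ) (hz : z ≠ 0) (α β F G H : ℤ → ℂ)
    (h1 : ∀ n : ℤ, z * (G (n - 1) - G n) + z * β n * F n + α n * H (n - 1) = 0)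
    (h2 : ∀ n : ℤ, z * β n * F (n - 1) + α n * H n - G n + G (n - 1) = 0)
    (h3 : ∀ n : ℤ, -F n + z * F (n - 1) + α n * (G n + G (n - 1)) = 0)
    (h4 : ∀ n : ℤ, z * β n * (G n + G (n - 1)) - z * H n + H (n - 1) = 0)
    (hF : ∀ n : ℤ, F n ≠ 0) (w : ℂ)
    (hw : ∀ n : ℤ, w ^ 2 = G n ^ 2 - F n * H n)
    (hφ : ∀ n : ℤ, phiP F G w n ≠ 0)
    (hzα : ∀ n : ℤ, z + α n * phiP F G w (n - 1) ≠ 0)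
    (n₀ : ℤ) :
    (∀ n : ℤ, psi2 α β F G w z n₀ n = phiP F G w n * psi1 α F G w z n₀ n)
    ∧ (∀ n : ℤ,
        Matrix.mulVec !![z, α n; β n * z, 1]
            ![psi1 α F G w z n₀ (n - 1), psi2 α β F G w z n₀ (n - 1)]
          = ![psi1 α F G w z n₀ n, psi2 α β F G w z n₀ n])
    ∧ (∀ n : ℤ,
        Matrix.mulVec
            (Complex.I • !![G (n - 1), -(F (n - 1)); H (n - 1), -(G (n - 1))])
            ![psi1 α F G w z n₀ (n - 1), psi2 α β F G w z n₀ (n - 1)]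
          = (-(Complex.I * w)) •
              ![psi1 α F G w z n₀ (n - 1), psi2 α β F G w z n₀ (n - 1)]) := by
  have hwG : ∀ n : ℤ, w + G n ≠ 0 := by
    intro n h
    exact hφ n (by simp [phiP, h])
  -- key identity: zβ(n) + φ(n-1) = φ(n)(z + α(n)φ(n-1))
  have e1 : ∀ m : ℤ, F m * phiP F G w m = w + G m := by
    intro m; unfold phiP; field_simp [hF m]
  have key' : ∀ n : ℤ, z * β n + phiP F G w (n - 1)
      = phiP F G w n * (z + α n * phiP F G w (n - 1)) := by
    intro n
    apply mul_left_cancel₀ (mul_ne_zero (hF n) (hF (n - 1)))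
    linear_combination (F n) * h2 n - (w + G n) * h3 n - α n * hw n
      + (F n - α n * (w + G n)) * e1 (n - 1)
      - (z * F (n - 1) + α n * (F (n - 1) * phiP F G w (n - 1))) * e1 n
  have key : ∀ n : ℤ, phiP F G w (n - 1) * (z * β n * (phiP F G w (n - 1))⁻¹ + 1)
      = phiP F G w n * (z + α n * phiP F G w (n - 1)) := by
    intro n
    rw [← key' n]
    field_simp [hφ (n - 1)]
  have hb : ∀ n : ℤ, (z * β n * (phiP F G w (n - 1))⁻¹ + 1) ≠ 0 := by
    intro n h
    have k := key n
    rw [h, mul_zero] at k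
    exact (mul_ne_zero (hφ n) (hzα n)) k.symm
  have hψ1 : ∀ n : ℤ, psi1 α F G w z n₀ n
      = psi1 α F G w z n₀ (n - 1) * (z + α n * phiP F G w (n - 1)) :=
    fun n => prodZ_rec _ hzα n₀ n
  have hψ2 : ∀ n : ℤ, psi2 α β F G w z n₀ n
      = psi2 α β F G w z n₀ (n - 1) * (z * β n * (phiP F G w (n - 1))⁻¹ + 1) := by
    intro n
    unfold psi2
    rw [prodZ_rec _ hb n₀ n]
    ring
  have P1 : ∀ n : ℤ, psi2 α β F G w z n₀ n = phiP F G w n * psi1 α F G w z n₀ n := by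
    have main : ∀ m : ℤ, psi2 α β F G w z n₀ (n₀ + m)
        = phiP F G w (n₀ + m) * psi1 α F G w z n₀ (n₀ + m) := by
      intro m
      induction m using Int.induction_on with
      | zero =>
        have hempty : Finset.Icc (n₀ + 1) n₀ = ∅ := Finset.Icc_eq_empty (by omega)
        simp [psi1, psi2, prodZ, hempty]
      | succ m ih =>
        have e : n₀ + ((m : ℤ) + 1) - 1 = n₀ + m := by ring
        have k := key (n₀ + ((m : ℤ) + 1))
        rw [e] at k
        rw [hψ2 (n₀ + ((m : ℤ) + 1)), hψ1 (n₀ + ((m : ℤ) + 1)), e, ih]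
        linear_combination (psi1 α F G w z n₀ (n₀ + (m : ℤ))) * k
      | pred m ih =>
        have e : n₀ + (-(m : ℤ) - 1) = (n₀ + -(m : ℤ)) - 1 := by ring
        rw [e]
        apply mul_right_cancel₀ (hb (n₀ + -(m : ℤ)))
        rw [← hψ2 (n₀ + -(m : ℤ)), ih, hψ1 (n₀ + -(m : ℤ))]
        linear_combination -(psi1 α F G w z n₀ ((n₀ + -(m : ℤ)) - 1)) * key (n₀ + -(m : ℤ))
    intro n
    have := main (n - n₀)
    rwa [show n₀ + (n - n₀) = n by ring] at this
  have hH : ∀ m : ℤ, H m = (G m - w) * phiP F G w m := by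
    intro m
    apply mul_left_cancel₀ (hF m)
    linear_combination -(G m - w) * e1 m + hw m
  refine ⟨P1, fun n => ?_, fun n => ?_⟩
  · funext i
    fin_cases i
    · simp [Matrix.mulVec, dotProduct, Fin.sum_univ_two]
      rw [P1 (n - 1), hψ1 n]
      ring
    · simp [Matrix.mulVec, dotProduct, Fin.sum_univ_two]
      rw [P1 (n - 1), hψ2 n, P1 (n - 1)]
      linear_combination (psi1 α F G w z n₀ (n - 1)) * key' n
        - (psi1 α F G w z n₀ (n - 1)) * key n
  · funext i
    fin_cases i
    · simp [Matrix.mulVec, dotProduct, Fin.sum_univ_two]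
      rw [P1 (n - 1)]
      linear_combination (-Complex.I * psi1 α F G w z n₀ (n - 1)) * e1 (n - 1)
    · simp [Matrix.mulVec, dotProduct, Fin.sum_univ_two]
      rw [P1 (n - 1), hH (n - 1)]
      ring
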